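/- Let G be a graph on n vertices with m edges, t triangles and book number b. Then (6b - n)·t ≥ b·(Σ_v d(v)² - nm). -/

import Mathlib

open Finset SimpleGraph

namespace BNaux

variable {V : Type*} [Fintype V] [DecidableEq V] (G : SimpleGraph V) [DecidableRel G.Adj]

/-- number of common neighbours -/
def cN (u v : V) : ℕ := (G.neighborFinset u ∩ G.neighborFinset v).card

lemma cN_symm (u v : V) : cN G u v = cN G v u := by rw [cN, cN, inter_comm]

lemma card_eq_sum_ind (s : Finset V) : s.card = ∑ x : V, (if x ∈ s then 1 else 0) := by
  simp [Finset.sum_ite_mem, Finset.univ_inter]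

/-- pair bound: `d u + d v ≤ n + |N(u) ∩ N(v)|`. -/
lemma pair_le (u v : V) : G.degree u + G.degree v ≤ Fintype.card V + cN G u v := by
  have h := Finset.card_union_add_card_inter (G.neighborFinset u) (G.neighborFinset v)
  have h2 : (G.neighborFinset u ∪ G.neighborFinset v).card ≤ Fintype.card V :=
    Finset.card_le_card (Finset.subset_univ _)
  simp only [SimpleGraph.degree, cN] at *
  omega

/-- triple bound: `d u + d v + d w ≤ c(u,v) + c(u,w) + c(v,w) + n`. -/
lemma triple_le (u v w : V) :
    G.degree u + G.degree v + G.degree w ≤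
      cN G u v + cN G u w + cN G v w + Fintype.card V := by
  simp only [SimpleGraph.degree, cN]
  rw [card_eq_sum_ind, card_eq_sum_ind, card_eq_sum_ind,
    card_eq_sum_ind (G.neighborFinset u ∩ G.neighborFinset v),
    card_eq_sum_ind (G.neighborFinset u ∩ G.neighborFinset w),
    card_eq_sum_ind (G.neighborFinset v ∩ G.neighborFinset w)]
  have hcard : (Fintype.card V) = ∑ _x : V, 1 := by simp
  rw [hcard, ← Finset.sum_add_distrib, ← Finset.sum_add_distrib, ← Finset.sum_add_distrib,
    ← Finset.sum_add_distrib, ← Finset.sum_add_distrib]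
  apply Finset.sum_le_sum
  intro x _
  by_cases h1 : x ∈ G.neighborFinset u <;> by_cases h2 : x ∈ G.neighborFinset v <;>
    by_cases h3 : x ∈ G.neighborFinset w <;> simp [h1, h2, h3]

/-- ordered adjacent pairs -/
def P : Finset (V × V) := Finset.univ.filter fun p : V × V => G.Adj p.1 p.2

/-- ordered triangles -/
def T3 : Finset (V × V × V) :=
  Finset.univ.filter fun q : V × V × V => G.Adj q.1 q.2.1 ∧ G.Adj q.1 q.2.2 ∧ G.Adj q.2.1 q.2.2

lemma filter_adj (u : V) : (Finset.univ.filter fun v => G.Adj u v) = G.neighborFinset u := by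
  ext v; simp [SimpleGraph.mem_neighborFinset]

lemma sum_P (f : V → V → ℝ) :
    ∑ p ∈ P G, f p.1 p.2 = ∑ u : V, ∑ v ∈ G.neighborFinset u, f u v := by
  rw [P, Finset.sum_filter, Fintype.sum_prod_type]
  refine Finset.sum_congr rfl fun u _ => ?_
  rw [← Finset.sum_filter, filter_adj]

lemma sum_P_deg1 : ∑ p ∈ P G, (G.degree p.1 : ℝ) = ∑ v : V, (G.degree v : ℝ) ^ 2 := by
  rw [sum_P G (fun u _ => (G.degree u : ℝ))]
  refine Finset.sum_congr rfl fun u _ => ?_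
  rw [Finset.sum_const, SimpleGraph.card_neighborFinset_eq_degree]
  simp [sq]

lemma sum_P_deg2 : ∑ p ∈ P G, (G.degree p.2 : ℝ) = ∑ v : V, (G.degree v : ℝ) ^ 2 := by
  rw [← sum_P_deg1]
  apply Finset.sum_nbij' (fun p : V × V => (p.2, p.1)) (fun p : V × V => (p.2, p.1)) <;>
    simp [P, SimpleGraph.adj_comm]

lemma sum_P_const : ∑ p ∈ P G, (1 : ℝ) = 2 * G.edgeFinset.card := by
  rw [Finset.sum_const, nsmul_eq_mul, mul_one]
  rw [show (P G).card = 2 * G.edgeFinset.card by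
    rw [SimpleGraph.two_mul_card_edgeFinset]; rfl]
  push_cast; ring

/-- convert T3 sums of pair functions to P sums weighted by cN -/
lemma sum_T3_pair (f : V → V → ℝ) :
    ∑ q ∈ T3 G, f q.1 q.2.1 = ∑ p ∈ P G, (cN G p.1 p.2 : ℝ) * f p.1 p.2 := by
  rw [T3, P, Finset.sum_filter, Finset.sum_filter, Fintype.sum_prod_type,
    Fintype.sum_prod_type]
  refine Finset.sum_congr rfl fun u _ => ?_
  rw [Fintype.sum_prod_type]
  refine Finset.sum_congr rfl fun v _ => ?_
  by_cases h : G.Adj u v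
  · simp only [h, true_and, if_true]
    have hfil : (Finset.univ.filter fun w => G.Adj u w ∧ G.Adj v w) =
        G.neighborFinset u ∩ G.neighborFinset v := by
      ext w; simp [SimpleGraph.mem_neighborFinset]
    rw [← Finset.sum_filter, hfil, Finset.sum_const, nsmul_eq_mul, cN]
  · simp [h]

/-- cyclic invariance of T3 sums -/
lemma sum_T3_cyc (F : V × V × V → ℝ) :
    ∑ q ∈ T3 G, F (q.2.1, q.2.2, q.1) = ∑ q ∈ T3 G, F q := by
  apply Finset.sum_nbij' (fun q : V × V × V => (q.2.1, q.2.2, q.1))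
    (fun q : V × V × V => (q.2.2, q.1, q.2.1)) <;>
    simp +contextual [T3, SimpleGraph.adj_comm]

lemma fiber_card (s : Finset V) (hs : s ∈ G.cliqueFinset 3) :
    ((T3 G).filter fun q => ({q.1, q.2.1, q.2.2} : Finset V) = s).card = 6 := by
  obtain ⟨a, b, c, hab, hac, hbc, rfl⟩ :=
    SimpleGraph.is3Clique_iff.1 (SimpleGraph.mem_cliqueFinset_iff.1 hs)
  have nab : a ≠ b := G.ne_of_adj hab
  have nac : a ≠ c := G.ne_of_adj hac
  have nbc : b ≠ c := G.ne_of_adj hbc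
  have hba := hab.symm; have hca := hac.symm; have hcb := hbc.symm
  have hset : ((T3 G).filter fun q => ({q.1, q.2.1, q.2.2} : Finset V) = {a, b, c}) =
      {(a,b,c), (a,c,b), (b,a,c), (b,c,a), (c,a,b), (c,b,a)} := by
    ext ⟨x, y, z⟩
    simp only [Finset.mem_filter, T3, Finset.mem_univ, true_and, Finset.mem_insert,
      Finset.mem_singleton, Prod.mk.injEq]
    constructor
    · rintro ⟨⟨hxy, hxz, hyz⟩, hfs⟩
      have hx : x ∈ ({a, b, c} : Finset V) := by rw [← hfs]; simp
      have hy : y ∈ ({a, b, c} : Finset V) := by rw [← hfs]; simp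
      have hz : z ∈ ({a, b, c} : Finset V) := by rw [← hfs]; simp
      have nxy := G.ne_of_adj hxy
      have nxz := G.ne_of_adj hxz
      have nyz := G.ne_of_adj hyz
      simp only [Finset.mem_insert, Finset.mem_singleton] at hx hy hz
      rcases hx with rfl | rfl | rfl <;> rcases hy with rfl | rfl | rfl <;>
        rcases hz with rfl | rfl | rfl <;> simp_all
    · rintro (⟨rfl, rfl, rfl⟩ | ⟨rfl, rfl, rfl⟩ | ⟨rfl, rfl, rfl⟩ | ⟨rfl, rfl, rfl⟩ |
        ⟨rfl, rfl, rfl⟩ | ⟨rfl, rfl, rfl⟩) <;>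
      refine ⟨⟨by assumption, by assumption, by assumption⟩,
        by ext t; simp only [Finset.mem_insert, Finset.mem_singleton]; try tauto⟩
  rw [hset]
  repeat rw [Finset.card_insert_of_notMem (by simp_all [Prod.ext_iff])]
  rfl

lemma card_T3 : (T3 G).card = 6 * (G.cliqueFinset 3).card := by
  rw [Finset.card_eq_sum_card_fiberwise
    (f := fun q : V × V × V => ({q.1, q.2.1, q.2.2} : Finset V)) (t := G.cliqueFinset 3)
    (by
      intro q hq
      rw [T3, Finset.mem_coe, Finset.mem_filter] at hq
      exact SimpleGraph.mem_cliqueFinset_iff.2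
        (is3Clique_triple_iff.2 ⟨hq.2.1, hq.2.2.1, hq.2.2.2⟩))]
  rw [Finset.sum_congr rfl (fiber_card G), Finset.sum_const, smul_eq_mul, mul_comm]

end BNaux

open BNaux

/-- Bollobás–Nikiforov: if `G` has `n` vertices, `m` edges, `t` triangles and book
number `b` (the maximum, over adjacent pairs, of the number of common neighbors), then
`(6b - n)·t ≥ b·(Σ_v d(v)² - nm)`. -/
theorem bollobas_nikiforov {V : Type*} [Fintype V] [DecidableEq V] (G : SimpleGraph V)
    [DecidableRel G.Adj] (n m t b : ℕ) (hn : Fintype.card V = n)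
    (hm : G.edgeFinset.card = m) (ht : (G.cliqueFinset 3).card = t)
    (hb : b = (Finset.univ.filter fun p : V × V => G.Adj p.1 p.2).sup
      fun p => (G.neighborFinset p.1 ∩ G.neighborFinset p.2).card) :
    (6 * (b : ℝ) - n) * t ≥ (b : ℝ) * ((∑ v : V, (G.degree v : ℝ) ^ 2) - n * m) := by
  subst hn hm ht
  set n := Fintype.card V with hn'
  set m := G.edgeFinset.card with hm'
  set t := (G.cliqueFinset 3).card with ht'
  set D := ∑ v : V, (G.degree v : ℝ) ^ 2 with hD
  -- the bound c ≤ b on adjacent pairs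
  have hcb : ∀ p ∈ P G, (cN G p.1 p.2 : ℝ) ≤ b := by
    intro p hp
    have : cN G p.1 p.2 ≤ b := by
      rw [hb]
      exact Finset.le_sup (f := fun p : V × V =>
        (G.neighborFinset p.1 ∩ G.neighborFinset p.2).card) hp
    exact_mod_cast this
  -- sum identities
  have e1 : ∑ p ∈ P G, (cN G p.1 p.2 : ℝ) = 6 * t := by
    have := sum_T3_pair G (fun _ _ => (1 : ℝ))
    simp only [mul_one] at this
    rw [← this, Finset.sum_const, card_T3]
    push_cast; ring
  have e2 : ∑ p ∈ P G, ((G.degree p.1 : ℝ) + (G.degree p.2 : ℝ)) = 2 * D := by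
    rw [Finset.sum_add_distrib, sum_P_deg1, sum_P_deg2, hD]; ring
  have e3 : ∑ p ∈ P G, (1 : ℝ) = 2 * m := sum_P_const G
  -- define the integrands
  -- H on triples
  set H : V × V × V → ℝ := fun q =>
    6 * (cN G q.1 q.2.1 : ℝ) - 3 * ((G.degree q.1 : ℝ) + (G.degree q.2.1 : ℝ)) + 2 * n
    with hH
  -- triple nonnegativity
  have htriple : ∀ q : V × V × V, 0 ≤ H q + H (q.2.1, q.2.2, q.1) + H (q.2.2, q.1, q.2.1) := by
    intro ⟨u, v, w⟩
    have h := triple_le G u v w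
    have h' : (G.degree u : ℝ) + G.degree v + G.degree w ≤
        (cN G u v : ℝ) + cN G u w + cN G v w + n := by exact_mod_cast h
    simp only [hH]
    rw [cN_symm G w u]
    nlinarith [h']
  -- sum over T3 of H is nonnegative
  have c1 : ∑ q ∈ T3 G, H (q.2.1, q.2.2, q.1) = ∑ q ∈ T3 G, H q := sum_T3_cyc G H
  have c2 : ∑ q ∈ T3 G, H (q.2.2, q.1, q.2.1) = ∑ q ∈ T3 G, H q := by
    simpa using (sum_T3_cyc G (fun r => H (r.2.1, r.2.2, r.1))).trans (sum_T3_cyc G H)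
  have hT3 : 0 ≤ ∑ q ∈ T3 G, H q := by
    have hsum : 0 ≤ (∑ q ∈ T3 G, H q) + (∑ q ∈ T3 G, H (q.2.1, q.2.2, q.1)) +
        ∑ q ∈ T3 G, H (q.2.2, q.1, q.2.1) := by
      rw [← Finset.sum_add_distrib, ← Finset.sum_add_distrib]
      exact Finset.sum_nonneg (fun q _ => htriple q)
    rw [c1, c2] at hsum
    linarith
  -- convert to P sum
  have e4 : ∑ q ∈ T3 G, H q = ∑ p ∈ P G,
      (6 * (cN G p.1 p.2 : ℝ) ^ 2
        - 3 * (cN G p.1 p.2 : ℝ) * ((G.degree p.1 : ℝ) + (G.degree p.2 : ℝ))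
        + 2 * n * (cN G p.1 p.2 : ℝ)) := by
    rw [hH, sum_T3_pair G (fun u v =>
      6 * (cN G u v : ℝ) - 3 * ((G.degree u : ℝ) + (G.degree v : ℝ)) + 2 * n)]
    exact Finset.sum_congr rfl fun p _ => by ring
  -- pointwise comparison on P
  have e5 : ∑ p ∈ P G,
      (6 * (cN G p.1 p.2 : ℝ) ^ 2
        - 3 * (cN G p.1 p.2 : ℝ) * ((G.degree p.1 : ℝ) + (G.degree p.2 : ℝ))
        + 2 * n * (cN G p.1 p.2 : ℝ)) ≤
      ∑ p ∈ P G,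
      ((6 * (b : ℝ) - n) * (cN G p.1 p.2 : ℝ)
        - 3 * b * ((G.degree p.1 : ℝ) + (G.degree p.2 : ℝ)) + 3 * b * n) := by
    apply Finset.sum_le_sum
    intro p hp
    have hc := hcb p hp
    have hpair : (G.degree p.1 : ℝ) + (G.degree p.2 : ℝ) ≤ n + cN G p.1 p.2 := by
      exact_mod_cast pair_le G p.1 p.2
    have hc0 : (0 : ℝ) ≤ cN G p.1 p.2 := by positivity
    nlinarith [mul_nonneg (sub_nonneg.2 hc)
      (by nlinarith : (0:ℝ) ≤ 2 * (cN G p.1 p.2 : ℝ)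
        - ((G.degree p.1 : ℝ) + (G.degree p.2 : ℝ)) + n)]
  -- total of the majorant
  have e6 : ∑ p ∈ P G,
      ((6 * (b : ℝ) - n) * (cN G p.1 p.2 : ℝ)
        - 3 * b * ((G.degree p.1 : ℝ) + (G.degree p.2 : ℝ)) + 3 * b * n) =
      (6 * (b : ℝ) - n) * (6 * t) - 3 * b * (2 * D) + 3 * b * n * (2 * m) := by
    rw [Finset.sum_add_distrib, Finset.sum_sub_distrib, ← Finset.mul_sum, ← Finset.mul_sum,
      e1, e2]
    have : ∑ _p ∈ P G, 3 * (b : ℝ) * n = 3 * b * n * ∑ p ∈ P G, (1 : ℝ) := by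
      rw [Finset.mul_sum]; exact Finset.sum_congr rfl fun _ _ => by ring
    rw [this, e3]
  have final : 0 ≤ (6 * (b : ℝ) - n) * (6 * t) - 3 * b * (2 * D) + 3 * b * n * (2 * m) := by
    rw [← e6]
    calc (0:ℝ) ≤ ∑ q ∈ T3 G, H q := hT3
      _ = _ := e4
      _ ≤ _ := e5
  nlinarith [final]
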